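/- Let C be a symmetric monoidal category and N : FinType → C a symmetric lax monoidal functor satisfying the nerve condition. Then H := N(Fin 2), equipped with the product μ, unit, coproduct Δ, counit ε and antipode S described below, is a Hopf monoid in C whose underlying monoid is commutative. -/

import Mathlib

open CategoryTheory CategoryTheory.Limits MonoidalCategory CategoryTheory.Functor.LaxMonoidal

noncomputable local instance fintypeCatMonoidal : MonoidalCategory FintypeCat.{0} :=
  monoidalOfHasFiniteCoproducts FintypeCat

noncomputable local instance fintypeCatSymmetric : SymmetricCategory FintypeCat.{0} :=
  symmetricOfHasFiniteCoproducts FintypeCat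

variable {C : Type*} [Category C] [MonoidalCategory C] [SymmetricCategory C]

/-- `H := N(Fin 2)`. -/
noncomputable def nerveH (N : LaxBraidedFunctor FintypeCat.{0} C) : C :=
  N.obj (FintypeCat.of (Fin 2))

/-- The tensor powers `H^{⊗m}` of `H := N(Fin 2)`. -/
noncomputable def nervePow (N : LaxBraidedFunctor FintypeCat.{0} C) : ℕ → C
  | 0 => 𝟙_ C
  | 1 => nerveH N
  | m + 2 => nerveH N ⊗ nervePow N (m + 1)

/-- `φ_0 : Fin 2 → Fin (m+2)`, the inclusion. -/
def phiZero (m : ℕ) : FintypeCat.of (Fin 2) ⟶ FintypeCat.of (Fin (m + 2)) :=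
  FintypeCat.homMk fun j => ⟨j.1, by omega⟩

/-- The shift `Fin (m+1) → Fin (m+2)`, `j ↦ j + 1`. -/
def shiftMap (m : ℕ) : FintypeCat.of (Fin (m + 1)) ⟶ FintypeCat.of (Fin (m + 2)) :=
  FintypeCat.homMk fun j => ⟨j.1 + 1, by omega⟩

/-- The gluing map `Fin 2 ⊔ Fin (m+1) → Fin (m+2)` restricting to `φ_0` on the first
summand and to the shift on the second; iterating it produces the maps `g_n` which
restrict to `φ_i` on the `(i+1)`-st summand. -/
noncomputable def glueMap (m : ℕ) :
    FintypeCat.of (Fin 2) ⊗ FintypeCat.of (Fin (m + 1)) ⟶ FintypeCat.of (Fin (m + 2)) :=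
  coprod.desc (phiZero m) (shiftMap m)

/-- The Segal morphism `Seg_{m+1} : H^{⊗m} → N(Fin (m+1))`: the iterated coherence
morphism `H^{⊗m} → N(Fin 2 ⊔ ⋯ ⊔ Fin 2)` followed by `N(g_{m+1})`.
For `m = 0` it is the composite `1_C → N(∅) → N(Fin 1)` of `c_1` with `N(∅ → Fin 1)`. -/
noncomputable def nerveSeg (N : LaxBraidedFunctor FintypeCat.{0} C) :
    (m : ℕ) → (nervePow N m ⟶ N.obj (FintypeCat.of (Fin (m + 1))))
  | 0 => ε N.toFunctor ≫ N.map (initial.to (FintypeCat.of (Fin 1)))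
  | 1 => 𝟙 (nerveH N)
  | m + 2 =>
      (nerveH N ◁ nerveSeg N (m + 1)) ≫
        μ N.toFunctor (FintypeCat.of (Fin 2)) (FintypeCat.of (Fin (m + 2))) ≫
        N.map (glueMap (m + 1))

/-- The nerve condition for a braided lax monoidal functor `N : FinType ⥤ C`:
all Segal morphisms `Seg_n` (`n ≥ 2`) are isomorphisms, and the composite
`1_C → N(∅) → N(Fin 1)` is an isomorphism. -/
def NerveCondBr (N : LaxBraidedFunctor FintypeCat.{0} C) : Prop :=
  ∀ m : ℕ, IsIso (nerveSeg N m)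

/-- The product `μ : H ⊗ H → H`: the coherence morphism `c_{Fin 2, Fin 2}` followed by
`N(q)`, where `q : Fin 2 ⊔ Fin 2 → Fin 2` is the identity on each summand. -/
noncomputable def nerveMul (N : LaxBraidedFunctor FintypeCat.{0} C) :
    nerveH N ⊗ nerveH N ⟶ nerveH N :=
  μ N.toFunctor (FintypeCat.of (Fin 2)) (FintypeCat.of (Fin 2)) ≫
    N.map (coprod.desc (𝟙 (FintypeCat.of (Fin 2))) (𝟙 (FintypeCat.of (Fin 2))))

/-- The unit `1_C → N(∅) → H`. -/
noncomputable def nerveOne (N : LaxBraidedFunctor FintypeCat.{0} C) : 𝟙_ C ⟶ nerveH N :=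
  ε N.toFunctor ≫ N.map (initial.to (FintypeCat.of (Fin 2)))

/-- `d : Fin 2 → Fin 3`, `0 ↦ 0`, `1 ↦ 2`. -/
def dMap : FintypeCat.of (Fin 2) ⟶ FintypeCat.of (Fin 3) :=
  FintypeCat.homMk fun j => ⟨2 * j.1, by omega⟩

/-- The coproduct `Δ := Seg_3⁻¹ ∘ N(d) : H → H ⊗ H`. -/
noncomputable def nerveComul (N : LaxBraidedFunctor FintypeCat.{0} C)
    (hN : NerveCondBr N) : nerveH N ⟶ nerveH N ⊗ nerveH N := by
  haveI : IsIso (nerveSeg N 2) := hN 2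
  exact N.map dMap ≫ (inv (nerveSeg N 2) : _ ⟶ nervePow N 2)

/-- The fold map `∇ : Fin 2 → Fin 1`. -/
def nablaMap : FintypeCat.of (Fin 2) ⟶ FintypeCat.of (Fin 1) :=
  FintypeCat.homMk fun _ => (0 : Fin 1)

/-- The counit `ε : H → 1_C`: `N(∇)` followed by the inverse of the isomorphism
`1_C ≅ N(Fin 1)`. -/
noncomputable def nerveCounit (N : LaxBraidedFunctor FintypeCat.{0} C)
    (hN : NerveCondBr N) : nerveH N ⟶ 𝟙_ C := by
  haveI : IsIso (nerveSeg N 0) := hN 0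
  exact N.map nablaMap ≫ (inv (nerveSeg N 0) : _ ⟶ nervePow N 0)

/-- The transposition `s : Fin 2 → Fin 2`. -/
def sMap : FintypeCat.of (Fin 2) ⟶ FintypeCat.of (Fin 2) :=
  FintypeCat.homMk fun j => ⟨1 - j.1, by omega⟩

/-- The antipode `S := N(s) : H → H`. -/
noncomputable def nerveAntipode (N : LaxBraidedFunctor FintypeCat.{0} C) :
    nerveH N ⟶ nerveH N :=
  N.map sMap

/-! ### Auxiliary material -/

noncomputable section NerveAux

open MonoidalCategory

/-- Shorthand for `Fin n` as an object of `FintypeCat`. -/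
abbrev finC (n : ℕ) : FintypeCat.{0} := FintypeCat.of (Fin n)

/-- The fold map `Fin 2 ⊔ Fin 2 → Fin 2`. -/
def qMap : finC 2 ⊗ finC 2 ⟶ finC 2 := coprod.desc (𝟙 _) (𝟙 _)

/-- The fold map `Fin 3 ⊔ Fin 3 → Fin 3`. -/
def q3Map : finC 3 ⊗ finC 3 ⟶ finC 3 := coprod.desc (𝟙 _) (𝟙 _)

def sgL : finC 3 ⟶ finC 2 := FintypeCat.homMk fun j => ⟨j.1 / 2, by omega⟩          -- 0,0,1
def sgR : finC 3 ⟶ finC 2 := FintypeCat.homMk fun j => ⟨if j.1 = 0 then 0 else 1, by split <;> omega⟩ -- 0,1,1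
def eLMap : finC 3 ⟶ finC 2 := FintypeCat.homMk fun j => ⟨(j.1 + 1) % 2, by omega⟩  -- 1,0,1
def eRMap : finC 3 ⟶ finC 2 := FintypeCat.homMk fun j => ⟨j.1 % 2, by omega⟩        -- 0,1,0
def hAMap : finC 3 ⟶ finC 4 := FintypeCat.homMk fun j => ⟨if j.1 = 2 then 3 else j.1, by split <;> omega⟩ -- 0,1,3
def hBMap : finC 3 ⟶ finC 4 := FintypeCat.homMk fun j => ⟨if j.1 = 0 then 0 else j.1 + 1, by split <;> omega⟩ -- 0,2,3
def inc3 : finC 3 ⟶ finC 4 := FintypeCat.homMk fun j => ⟨j.1, by omega⟩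
def sh2 : finC 2 ⟶ finC 4 := FintypeCat.homMk fun j => ⟨j.1 + 2, by omega⟩
def glueB : finC 3 ⊗ finC 2 ⟶ finC 4 := coprod.desc inc3 sh2
def pt0 : finC 1 ⟶ finC 2 := FintypeCat.homMk fun _ => ⟨0, by omega⟩
def pt1 : finC 1 ⟶ finC 2 := FintypeCat.homMk fun _ => ⟨1, by omega⟩
def wLMap : finC 1 ⊗ finC 2 ⟶ finC 2 := coprod.desc pt0 (𝟙 _)
def wRMap : finC 2 ⊗ finC 1 ⟶ finC 2 := coprod.desc (𝟙 _) pt1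
def t1Map : finC 1 ⊗ finC 1 ⟶ finC 1 := coprod.desc (𝟙 _) (𝟙 _)

lemma fin1_ext {A : FintypeCat.{0}} (f g : A ⟶ finC 1) : f = g := by
  refine FintypeCat.hom_ext _ _ (fun a => ?_); exact Subsingleton.elim (α := Fin 1) _ _

/-! FintypeCat-level identities -/

lemma fin_assoc : (qMap ▷ finC 2) ≫ qMap = (α_ (finC 2) (finC 2) (finC 2)).hom ≫ (finC 2 ◁ qMap) ≫ qMap := by
  show coprod.map qMap (𝟙 _) ≫ qMap =
    (coprod.associator _ _ _).hom ≫ coprod.map (𝟙 _) qMap ≫ qMap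
  apply coprod.hom_ext <;> [skip; simp [qMap, coprod.inl_desc, coprod.inr_desc, coprod.inl_desc_assoc, coprod.inr_desc_assoc]] <;> apply coprod.hom_ext <;> simp [qMap, coprod.inl_desc, coprod.inr_desc, coprod.inl_desc_assoc, coprod.inr_desc_assoc]

lemma fin_unitl : (λ_ (finC 2)).inv ≫ ((initial.to (finC 2) : (𝟙_ FintypeCat) ⟶ finC 2) ▷ finC 2) ≫ qMap = 𝟙 (finC 2) := by
  show coprod.inr ≫ coprod.map (initial.to _) (𝟙 _) ≫ qMap = 𝟙 _
  simp [qMap, coprod.inl_desc, coprod.inr_desc, coprod.inl_desc_assoc, coprod.inr_desc_assoc]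

lemma fin_unitr : (ρ_ (finC 2)).inv ≫ (finC 2 ◁ (initial.to (finC 2) : (𝟙_ FintypeCat) ⟶ finC 2)) ≫ qMap = 𝟙 (finC 2) := by
  show coprod.inl ≫ coprod.map (𝟙 _) (initial.to _) ≫ qMap = 𝟙 _
  simp [qMap, coprod.inl_desc, coprod.inr_desc, coprod.inl_desc_assoc, coprod.inr_desc_assoc]

lemma fin_comm : (β_ (finC 2) (finC 2)).hom ≫ qMap = qMap := by
  show (coprod.braiding _ _).hom ≫ qMap = qMap
  apply coprod.hom_ext <;> simp [qMap, coprod.inl_desc, coprod.inr_desc, coprod.inl_desc_assoc, coprod.inr_desc_assoc]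

lemma fin_coassoc1 : (finC 2 ◁ dMap) ≫ glueMap 2 = glueMap 1 ≫ hAMap := by
  show coprod.map (𝟙 _) dMap ≫ glueMap 2 = glueMap 1 ≫ hAMap
  unfold glueMap
  apply coprod.hom_ext <;> simp [coprod.inl_desc, coprod.inr_desc, coprod.inl_desc_assoc, coprod.inr_desc_assoc] <;> refine FintypeCat.hom_ext _ _ (fun j => ?_) <;> fin_cases j <;> rfl

lemma fin_coassoc2 : (α_ (finC 2) (finC 2) (finC 2)).hom ≫ (finC 2 ◁ glueMap 1) ≫ glueMap 2 =
    (glueMap 1 ▷ finC 2) ≫ glueB := by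
  show (coprod.associator _ _ _).hom ≫ coprod.map (𝟙 _) (glueMap 1) ≫ glueMap 2 =
    coprod.map (glueMap 1) (𝟙 _) ≫ glueB
  unfold glueMap glueB
  apply coprod.hom_ext
  · apply coprod.hom_ext <;> simp [coprod.inl_desc, coprod.inr_desc, coprod.inl_desc_assoc, coprod.inr_desc_assoc] <;> refine FintypeCat.hom_ext _ _ (fun j => ?_) <;> fin_cases j <;> rfl
  · simp [coprod.inl_desc, coprod.inr_desc, coprod.inl_desc_assoc, coprod.inr_desc_assoc] <;> refine FintypeCat.hom_ext _ _ (fun j => ?_) <;> fin_cases j <;> rfl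

lemma fin_coassoc3 : (dMap ▷ finC 2) ≫ glueB = glueMap 1 ≫ hBMap := by
  show coprod.map dMap (𝟙 _) ≫ glueB = glueMap 1 ≫ hBMap
  unfold glueMap glueB
  apply coprod.hom_ext <;> simp [coprod.inl_desc, coprod.inr_desc, coprod.inl_desc_assoc, coprod.inr_desc_assoc] <;> refine FintypeCat.hom_ext _ _ (fun j => ?_) <;> fin_cases j <;> rfl

lemma fin_coassoc4 : dMap ≫ hAMap = dMap ≫ hBMap := by
  refine FintypeCat.hom_ext _ _ (fun j => ?_) <;> fin_cases j <;> rfl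

lemma fin_counitl1 : (λ_ (finC 2)).inv ≫ ((initial.to (finC 1) : (𝟙_ FintypeCat) ⟶ finC 1) ▷ finC 2) ≫ wLMap = 𝟙 (finC 2) := by
  show coprod.inr ≫ coprod.map (initial.to _) (𝟙 _) ≫ wLMap = 𝟙 _
  simp [wLMap, coprod.inl_desc, coprod.inr_desc, coprod.inl_desc_assoc, coprod.inr_desc_assoc]

lemma fin_counitl2 : (nablaMap ▷ finC 2) ≫ wLMap = glueMap 1 ≫ sgL := by
  show coprod.map nablaMap (𝟙 _) ≫ wLMap = glueMap 1 ≫ sgL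
  unfold glueMap wLMap
  apply coprod.hom_ext <;> simp [coprod.inl_desc, coprod.inr_desc, coprod.inl_desc_assoc, coprod.inr_desc_assoc] <;> refine FintypeCat.hom_ext _ _ (fun j => ?_) <;> fin_cases j <;> rfl

lemma fin_counitl3 : dMap ≫ sgL = 𝟙 (finC 2) := by
  refine FintypeCat.hom_ext _ _ (fun j => ?_) <;> fin_cases j <;> rfl

lemma fin_counitr1 : (ρ_ (finC 2)).inv ≫ (finC 2 ◁ (initial.to (finC 1) : (𝟙_ FintypeCat) ⟶ finC 1)) ≫ wRMap = 𝟙 (finC 2) := by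
  show coprod.inl ≫ coprod.map (𝟙 _) (initial.to _) ≫ wRMap = 𝟙 _
  simp [wRMap, coprod.inl_desc, coprod.inr_desc, coprod.inl_desc_assoc, coprod.inr_desc_assoc]

lemma fin_counitr2 : (finC 2 ◁ nablaMap) ≫ wRMap = glueMap 1 ≫ sgR := by
  show coprod.map (𝟙 _) nablaMap ≫ wRMap = glueMap 1 ≫ sgR
  unfold glueMap wRMap
  apply coprod.hom_ext <;> simp [coprod.inl_desc, coprod.inr_desc, coprod.inl_desc_assoc, coprod.inr_desc_assoc] <;> refine FintypeCat.hom_ext _ _ (fun j => ?_) <;> fin_cases j <;> rfl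

lemma fin_counitr3 : dMap ≫ sgR = 𝟙 (finC 2) := by
  refine FintypeCat.hom_ext _ _ (fun j => ?_) <;> fin_cases j <;> rfl

lemma fin_compat1 : tensorμ (finC 2) (finC 2) (finC 2) (finC 2) ≫ (qMap ⊗ₘ qMap) ≫ glueMap 1 =
    (glueMap 1 ⊗ₘ glueMap 1) ≫ q3Map := by
  show ((coprod.associator _ _ _).hom ≫
      coprod.map (𝟙 _) (coprod.associator _ _ _).inv ≫
      coprod.map (𝟙 _) (coprod.map (coprod.braiding _ _).hom (𝟙 _)) ≫
      coprod.map (𝟙 _) (coprod.associator _ _ _).hom ≫ (coprod.associator _ _ _).inv) ≫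
      coprod.map qMap qMap ≫ glueMap 1 = coprod.map (glueMap 1) (glueMap 1) ≫ q3Map
  unfold glueMap qMap q3Map
  apply coprod.hom_ext
  · apply coprod.hom_ext <;> simp [coprod.inl_desc, coprod.inr_desc, coprod.inl_desc_assoc, coprod.inr_desc_assoc] <;> refine FintypeCat.hom_ext _ _ (fun j => ?_) <;> fin_cases j <;> rfl
  · apply coprod.hom_ext <;> simp [coprod.inl_desc, coprod.inr_desc, coprod.inl_desc_assoc, coprod.inr_desc_assoc] <;> refine FintypeCat.hom_ext _ _ (fun j => ?_) <;> fin_cases j <;> rfl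

lemma fin_compat2 : qMap ≫ dMap = (dMap ⊗ₘ dMap) ≫ q3Map := by
  show qMap ≫ dMap = coprod.map dMap dMap ≫ q3Map
  unfold qMap q3Map
  apply coprod.hom_ext <;> simp [coprod.inl_desc, coprod.inr_desc, coprod.inl_desc_assoc, coprod.inr_desc_assoc] <;> refine FintypeCat.hom_ext _ _ (fun j => ?_) <;> fin_cases j <;> rfl

lemma fin_anti1 : (sMap ▷ finC 2) ≫ qMap = glueMap 1 ≫ eLMap := by
  show coprod.map sMap (𝟙 _) ≫ qMap = glueMap 1 ≫ eLMap
  unfold glueMap qMap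
  apply coprod.hom_ext <;> simp [coprod.inl_desc, coprod.inr_desc, coprod.inl_desc_assoc, coprod.inr_desc_assoc] <;> refine FintypeCat.hom_ext _ _ (fun j => ?_) <;> fin_cases j <;> rfl

lemma fin_anti2 : dMap ≫ eLMap = nablaMap ≫ pt1 := by
  refine FintypeCat.hom_ext _ _ (fun j => ?_) <;> fin_cases j <;> rfl

lemma fin_anti3 : (finC 2 ◁ sMap) ≫ qMap = glueMap 1 ≫ eRMap := by
  show coprod.map (𝟙 _) sMap ≫ qMap = glueMap 1 ≫ eRMap
  unfold glueMap qMap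
  apply coprod.hom_ext <;> simp [coprod.inl_desc, coprod.inr_desc, coprod.inl_desc_assoc, coprod.inr_desc_assoc] <;> refine FintypeCat.hom_ext _ _ (fun j => ?_) <;> fin_cases j <;> rfl

lemma fin_anti4 : dMap ≫ eRMap = nablaMap ≫ pt0 := by
  refine FintypeCat.hom_ext _ _ (fun j => ?_) <;> fin_cases j <;> rfl

end NerveAux
section TM
variable {C₁ C₂ : Type*} [Category C₁] [Category C₂] [MonoidalCategory C₁]
  [MonoidalCategory C₂] [BraidedCategory C₁] [BraidedCategory C₂]
  (F : C₁ ⥤ C₂) [F.LaxBraided]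

lemma assoc1 (P Q R : C₁) :
    (μ F P Q ▷ F.obj R) ≫ μ F (P ⊗ Q) R =
      (α_ (F.obj P) (F.obj Q) (F.obj R)).hom ≫ (F.obj P ◁ μ F Q R) ≫ μ F P (Q ⊗ R) ≫
        F.map (α_ P Q R).inv := by
  rw [← cancel_mono (F.map (α_ P Q R).hom)]
  simp [associativity]

lemma inner_lemma (B X Y : C₁) :
    (α_ (F.obj B) (F.obj X) (F.obj Y)).inv ≫ ((β_ (F.obj B) (F.obj X)).hom ▷ F.obj Y) ≫
      (α_ (F.obj X) (F.obj B) (F.obj Y)).hom ≫ (F.obj X ◁ μ F B Y) ≫ μ F X (B ⊗ Y) =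
    (F.obj B ◁ μ F X Y) ≫ μ F B (X ⊗ Y) ≫
      F.map ((α_ B X Y).inv ≫ ((β_ B X).hom ▷ Y) ≫ (α_ X B Y).hom) := by
  rw [← cancel_mono (F.map (α_ X B Y).inv)]
  slice_lhs 3 5 => rw [← associativity]
  slice_lhs 2 3 => rw [← comp_whiskerRight, ← Functor.LaxBraided.braided, comp_whiskerRight]
  slice_lhs 3 4 => rw [μ_natural_left]
  slice_lhs 2 3 => rw [assoc1]
  simp only [Category.assoc, Iso.inv_hom_id_assoc, ← F.map_comp]

lemma map_tensormu (A B X Y : C₁) :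
    tensorμ (F.obj A) (F.obj B) (F.obj X) (F.obj Y) ≫ (μ F A X ⊗ₘ μ F B Y) ≫
        μ F (A ⊗ X) (B ⊗ Y) =
      (μ F A B ⊗ₘ μ F X Y) ≫ μ F (A ⊗ B) (X ⊗ Y) ≫ F.map (tensorμ A B X Y) := by
  have coh : (A ◁ ((α_ B X Y).inv ≫ ((β_ B X).hom ▷ Y) ≫ (α_ X B Y).hom)) ≫
      (α_ A X (B ⊗ Y)).inv = (α_ A B (X ⊗ Y)).inv ≫ tensorμ A B X Y := by
    simp [tensorμ, MonoidalCategory.whiskerLeft_comp]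
  conv_lhs => rw [tensorμ, MonoidalCategory.tensorHom_def]
  slice_lhs 6 7 => rw [← whisker_exchange]
  slice_lhs 7 8 => rw [assoc1]
  slice_lhs 6 7 => rw [associator_naturality_right]
  slice_lhs 5 6 => rw [Iso.inv_hom_id]
  simp only [Category.id_comp, Category.assoc]
  simp only [← MonoidalCategory.whiskerLeft_comp, ← Category.assoc]
  simp only [Category.assoc]
  rw [inner_lemma]
  simp only [MonoidalCategory.whiskerLeft_comp, Category.assoc]
  simp only [μ_natural_right_assoc]
  conv_rhs => rw [MonoidalCategory.tensorHom_def]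
  slice_rhs 1 2 => rw [← whisker_exchange]
  slice_rhs 2 3 => rw [assoc1]
  slice_rhs 1 2 => rw [associator_naturality_right]
  simp only [Category.assoc, ← F.map_comp]
  rw [← coh]

end TM

section CHelpers

variable (N : LaxBraidedFunctor FintypeCat.{0} C)

lemma nerveMul_def : nerveMul N = μ N.toFunctor (finC 2) (finC 2) ≫ N.map qMap := rfl

lemma nerveOne_def : nerveOne N = ε N.toFunctor ≫ N.map (initial.to (finC 2)) := rfl

lemma nerveAntipode_def : nerveAntipode N = N.map sMap := rfl

lemma seg0_def : nerveSeg N 0 = ε N.toFunctor ≫ N.map (initial.to (finC 1)) := rfl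

lemma seg1_def : nerveSeg N 1 = 𝟙 (nerveH N) := rfl

lemma seg2_def : nerveSeg N 2 = μ N.toFunctor (finC 2) (finC 2) ≫ N.map (glueMap 1) := by
  show (nerveH N ◁ 𝟙 (nerveH N)) ≫ μ N.toFunctor (finC 2) (finC 2) ≫ N.map (glueMap 1) =
    μ N.toFunctor (finC 2) (finC 2) ≫ N.map (glueMap 1)
  rw [MonoidalCategory.whiskerLeft_id, Category.id_comp]
  rfl

lemma seg3_def : nerveSeg N 3 = (nerveH N ◁ nerveSeg N 2) ≫
    μ N.toFunctor (finC 2) (finC 3) ≫ N.map (glueMap 2) := rfl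

lemma comul_seg2 (hN : NerveCondBr N) :
    nerveComul N hN ≫ nerveSeg N 2 = N.map dMap := by
  haveI := hN 2
  show (N.map dMap ≫ inv (nerveSeg N 2)) ≫ nerveSeg N 2 = N.map dMap
  rw [Category.assoc, IsIso.inv_hom_id, Category.comp_id]

lemma counit_seg0 (hN : NerveCondBr N) :
    nerveCounit N hN ≫ nerveSeg N 0 = N.map nablaMap := by
  haveI := hN 0
  show (N.map nablaMap ≫ inv (nerveSeg N 0)) ≫ nerveSeg N 0 = N.map nablaMap
  rw [Category.assoc, IsIso.inv_hom_id, Category.comp_id]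

lemma eps_mu (X : FintypeCat.{0}) :
    (ε N.toFunctor ▷ N.obj X) ≫ μ N.toFunctor (𝟙_ FintypeCat) X =
      (λ_ (N.obj X)).hom ≫ N.map (λ_ X).inv := by
  have h : (ε N.toFunctor ▷ N.obj X) ≫ μ N.toFunctor (𝟙_ FintypeCat) X ≫
      N.map (λ_ X).hom = (λ_ (N.obj X)).hom := (left_unitality N.toFunctor X).symm
  rw [← h, Category.assoc, Category.assoc, ← N.toFunctor.map_comp, Iso.hom_inv_id,
    N.toFunctor.map_id, Category.comp_id]

lemma eps_mu_r (X : FintypeCat.{0}) :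
    (N.obj X ◁ ε N.toFunctor) ≫ μ N.toFunctor X (𝟙_ FintypeCat) =
      (ρ_ (N.obj X)).hom ≫ N.map (ρ_ X).inv := by
  have h : (N.obj X ◁ ε N.toFunctor) ≫ μ N.toFunctor X (𝟙_ FintypeCat) ≫
      N.map (ρ_ X).hom = (ρ_ (N.obj X)).hom := (right_unitality N.toFunctor X).symm
  rw [← h, Category.assoc, Category.assoc, ← N.toFunctor.map_comp, Iso.hom_inv_id,
    N.toFunctor.map_id, Category.comp_id]

lemma lui (X : FintypeCat.{0}) :
    (λ_ (N.obj X)).inv ≫ (ε N.toFunctor ▷ N.obj X) ≫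
      μ N.toFunctor (𝟙_ FintypeCat) X = N.map (λ_ X).inv :=
  left_unitality_inv N.toFunctor X

lemma rui (X : FintypeCat.{0}) :
    (ρ_ (N.obj X)).inv ≫ (N.obj X ◁ ε N.toFunctor) ≫
      μ N.toFunctor X (𝟙_ FintypeCat) = N.map (ρ_ X).inv :=
  right_unitality_inv N.toFunctor X

lemma eps_eps :
    (λ_ (𝟙_ C)).inv ≫ (ε N.toFunctor ⊗ₘ ε N.toFunctor) ≫
        μ N.toFunctor (𝟙_ FintypeCat) (𝟙_ FintypeCat) =
      ε N.toFunctor ≫ N.map (λ_ (𝟙_ FintypeCat)).inv := by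
  rw [MonoidalCategory.tensorHom_def]
  slice_lhs 2 3 => rw [← whisker_exchange]
  slice_lhs 1 2 => rw [← leftUnitor_inv_naturality]
  slice_lhs 2 4 =>
    rw [show (λ_ (N.obj (𝟙_ FintypeCat))).inv ≫ (ε N.toFunctor ▷ N.obj (𝟙_ FintypeCat)) ≫
      μ N.toFunctor (𝟙_ FintypeCat) (𝟙_ FintypeCat) = N.map (λ_ (𝟙_ FintypeCat)).inv from
      left_unitality_inv N.toFunctor _]

end CHelpers

section Statements

variable (N : LaxBraidedFunctor FintypeCat.{0} C)

lemma st_assoc :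
    (nerveMul N ▷ nerveH N) ≫ nerveMul N =
      (α_ (nerveH N) (nerveH N) (nerveH N)).hom ≫ (nerveH N ◁ nerveMul N) ≫ nerveMul N := by
  erw [nerveMul_def, comp_whiskerRight, MonoidalCategory.whiskerLeft_comp]
  dsimp only [nerveH]
  slice_lhs 2 3 => rw [μ_natural_left]
  slice_lhs 3 4 => rw [← N.toFunctor.map_comp]
  rw [fin_assoc, N.toFunctor.map_comp, N.toFunctor.map_comp]
  slice_lhs 1 3 => rw [associativity]
  slice_lhs 3 4 => rw [← μ_natural_right]
  simp only [Category.assoc]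

lemma st_unitl : (nerveOne N ▷ nerveH N) ≫ nerveMul N = (λ_ (nerveH N)).hom := by
  erw [nerveOne_def, nerveMul_def, comp_whiskerRight]
  dsimp only [nerveH]
  slice_lhs 2 3 => rw [μ_natural_left]
  slice_lhs 1 2 => rw [eps_mu]
  slice_lhs 2 4 => rw [← N.toFunctor.map_comp, ← N.toFunctor.map_comp]
  rw [show (λ_ (finC 2)).inv ≫ (initial.to (finC 2) ▷ finC 2) ≫ qMap = 𝟙 (finC 2) from fin_unitl]
  simp

lemma st_unitr : (nerveH N ◁ nerveOne N) ≫ nerveMul N = (ρ_ (nerveH N)).hom := by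
  erw [nerveOne_def, nerveMul_def, MonoidalCategory.whiskerLeft_comp]
  dsimp only [nerveH]
  slice_lhs 2 3 => rw [μ_natural_right]
  slice_lhs 1 2 => rw [eps_mu_r]
  slice_lhs 2 4 => rw [← N.toFunctor.map_comp, ← N.toFunctor.map_comp]
  rw [show (ρ_ (finC 2)).inv ≫ (finC 2 ◁ initial.to (finC 2)) ≫ qMap = 𝟙 (finC 2) from fin_unitr]
  simp

lemma st_comm : (β_ (nerveH N) (nerveH N)).hom ≫ nerveMul N = nerveMul N := by
  erw [nerveMul_def, ← Category.assoc]
  dsimp only [nerveH]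
  rw [← Functor.LaxBraided.braided, Category.assoc, ← N.toFunctor.map_comp, fin_comm]

end Statements

section Statements2

variable (N : LaxBraidedFunctor FintypeCat.{0} C)

lemma fin_coassoc2' : (finC 2 ◁ glueMap 1) ≫ glueMap 2 =
    (α_ (finC 2) (finC 2) (finC 2)).inv ≫ (glueMap 1 ▷ finC 2) ≫ glueB := by
  rw [← fin_coassoc2, ← Category.assoc, ← Category.assoc, Iso.inv_hom_id, Category.id_comp]

/-- Versions of the structure maps typed with `N.obj (finC 2)` in place of `nerveH N`. -/
noncomputable def comulX (hN : NerveCondBr N) : N.obj (finC 2) ⟶ N.obj (finC 2) ⊗ N.obj (finC 2) :=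
  nerveComul N hN

noncomputable def counitX (hN : NerveCondBr N) : N.obj (finC 2) ⟶ 𝟙_ C := nerveCounit N hN

noncomputable def mulX : N.obj (finC 2) ⊗ N.obj (finC 2) ⟶ N.obj (finC 2) :=
  μ N.toFunctor (finC 2) (finC 2) ≫ N.map qMap

noncomputable def oneX : 𝟙_ C ⟶ N.obj (finC 2) := ε N.toFunctor ≫ N.map (initial.to (finC 2))

noncomputable def seg0X : 𝟙_ C ⟶ N.obj (finC 1) := ε N.toFunctor ≫ N.map (initial.to (finC 1))

noncomputable def seg2X : N.obj (finC 2) ⊗ N.obj (finC 2) ⟶ N.obj (finC 3) :=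
  μ N.toFunctor (finC 2) (finC 2) ≫ N.map (glueMap 1)

noncomputable def seg3X : N.obj (finC 2) ⊗ (N.obj (finC 2) ⊗ N.obj (finC 2)) ⟶ N.obj (finC 4) :=
  (N.obj (finC 2) ◁ seg2X N) ≫ μ N.toFunctor (finC 2) (finC 3) ≫ N.map (glueMap 2)

lemma isIso_seg0X (hN : NerveCondBr N) : IsIso (seg0X N) := hN 0

lemma isIso_seg2X (hN : NerveCondBr N) : IsIso (seg2X N) := by
  have h := hN 2
  rw [seg2_def] at h
  exact h

lemma isIso_seg3X (hN : NerveCondBr N) : IsIso (seg3X N) := by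
  have h := hN 3
  rw [seg3_def, seg2_def] at h
  exact h

lemma comul_seg2X (hN : NerveCondBr N) : comulX N hN ≫ seg2X N = N.map dMap := by
  have h := comul_seg2 N hN
  rw [seg2_def] at h
  exact h

lemma counit_seg0X (hN : NerveCondBr N) : counitX N hN ≫ seg0X N = N.map nablaMap :=
  counit_seg0 N hN

lemma comul_mu_glue (hN : NerveCondBr N) :
    comulX N hN ≫ μ N.toFunctor (finC 2) (finC 2) ≫ N.map (glueMap 1) = N.map dMap :=
  comul_seg2X N hN

lemma st_coassoc (hN : NerveCondBr N) :
    nerveComul N hN ≫ (nerveComul N hN ▷ nerveH N) =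
      nerveComul N hN ≫ (nerveH N ◁ nerveComul N hN) ≫
        (α_ (nerveH N) (nerveH N) (nerveH N)).inv := by
  haveI := isIso_seg3X N hN
  change comulX N hN ≫ (comulX N hN ▷ N.obj (finC 2)) =
    comulX N hN ≫ (N.obj (finC 2) ◁ comulX N hN) ≫
      (α_ (N.obj (finC 2)) (N.obj (finC 2)) (N.obj (finC 2))).inv
  rw [← Category.assoc (comulX N hN), Iso.eq_comp_inv, Category.assoc,
    ← cancel_mono (seg3X N)]
  simp only [Category.assoc]
  conv_rhs => rw [seg3X]
  -- RHS chain
  slice_rhs 2 3 => rw [← MonoidalCategory.whiskerLeft_comp, comul_seg2X]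
  slice_rhs 2 3 => rw [μ_natural_right]
  slice_rhs 3 4 => rw [← N.toFunctor.map_comp, fin_coassoc1, N.toFunctor.map_comp]
  slice_rhs 1 3 => rw [comul_mu_glue]
  -- LHS chain
  conv_lhs => rw [seg3X, seg2X]
  simp only [MonoidalCategory.whiskerLeft_comp]
  slice_lhs 5 6 => rw [μ_natural_right]
  slice_lhs 6 7 => rw [← N.toFunctor.map_comp, fin_coassoc2',
    N.toFunctor.map_comp, N.toFunctor.map_comp]
  slice_lhs 4 6 => rw [associativity_inv]
  slice_lhs 3 4 => rw [Iso.hom_inv_id]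
  simp only [Category.id_comp, Category.assoc]
  slice_lhs 4 5 => rw [← μ_natural_left]
  slice_lhs 2 4 => rw [← comp_whiskerRight, ← comp_whiskerRight, comul_mu_glue]
  slice_lhs 2 3 => rw [μ_natural_left]
  slice_lhs 3 4 => rw [← N.toFunctor.map_comp, fin_coassoc3, N.toFunctor.map_comp]
  slice_lhs 1 3 => rw [comul_mu_glue]
  rw [← N.toFunctor.map_comp, ← N.toFunctor.map_comp, fin_coassoc4]

lemma counit_whiskerRight (hN : NerveCondBr N) :
    (counitX N hN ▷ N.obj (finC 2)) =
      (N.map nablaMap ▷ N.obj (finC 2)) ≫ μ N.toFunctor (finC 1) (finC 2) ≫ N.map wLMap ≫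
        (λ_ (N.obj (finC 2))).inv := by
  haveI := isIso_seg0X N hN
  have h1 : (seg0X N ▷ N.obj (finC 2)) ≫
      (μ N.toFunctor (finC 1) (finC 2) ≫ N.map wLMap ≫ (λ_ (N.obj (finC 2))).inv) = 𝟙 _ := by
    rw [seg0X, comp_whiskerRight]
    slice_lhs 2 3 => rw [μ_natural_left]
    slice_lhs 1 2 => rw [eps_mu]
    slice_lhs 2 4 => rw [← N.toFunctor.map_comp, ← N.toFunctor.map_comp, fin_counitl1]
    rw [N.toFunctor.map_id]
    simp only [Category.id_comp, Category.comp_id, Iso.hom_inv_id]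
  have h2 : (inv (seg0X N) ▷ N.obj (finC 2)) =
      μ N.toFunctor (finC 1) (finC 2) ≫ N.map wLMap ≫ (λ_ (N.obj (finC 2))).inv := by
    rw [← Category.comp_id (inv (seg0X N) ▷ N.obj (finC 2)), ← h1, ← Category.assoc,
      ← comp_whiskerRight, IsIso.inv_hom_id, id_whiskerRight, Category.id_comp]
  rw [show counitX N hN = N.map nablaMap ≫ inv (seg0X N) from rfl,
    comp_whiskerRight, h2]

lemma counit_whiskerLeft (hN : NerveCondBr N) :
    (N.obj (finC 2) ◁ counitX N hN) =
      (N.obj (finC 2) ◁ N.map nablaMap) ≫ μ N.toFunctor (finC 2) (finC 1) ≫ N.map wRMap ≫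
        (ρ_ (N.obj (finC 2))).inv := by
  haveI := isIso_seg0X N hN
  have h1 : (N.obj (finC 2) ◁ seg0X N) ≫
      (μ N.toFunctor (finC 2) (finC 1) ≫ N.map wRMap ≫ (ρ_ (N.obj (finC 2))).inv) = 𝟙 _ := by
    rw [seg0X, MonoidalCategory.whiskerLeft_comp]
    slice_lhs 2 3 => rw [μ_natural_right]
    slice_lhs 1 2 => rw [eps_mu_r]
    slice_lhs 2 4 => rw [← N.toFunctor.map_comp, ← N.toFunctor.map_comp, fin_counitr1]
    rw [N.toFunctor.map_id]
    simp only [Category.id_comp, Category.comp_id, Iso.hom_inv_id]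
  have h2 : (N.obj (finC 2) ◁ inv (seg0X N)) =
      μ N.toFunctor (finC 2) (finC 1) ≫ N.map wRMap ≫ (ρ_ (N.obj (finC 2))).inv := by
    rw [← Category.comp_id (N.obj (finC 2) ◁ inv (seg0X N)), ← h1, ← Category.assoc,
      ← MonoidalCategory.whiskerLeft_comp, IsIso.inv_hom_id,
      MonoidalCategory.whiskerLeft_id, Category.id_comp]
  rw [show counitX N hN = N.map nablaMap ≫ inv (seg0X N) from rfl,
    MonoidalCategory.whiskerLeft_comp, h2]

lemma st_counitl (hN : NerveCondBr N) :
    nerveComul N hN ≫ (nerveCounit N hN ▷ nerveH N) = (λ_ (nerveH N)).inv := by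
  change comulX N hN ≫ (counitX N hN ▷ N.obj (finC 2)) = (λ_ (N.obj (finC 2))).inv
  rw [counit_whiskerRight N hN]
  slice_lhs 2 3 => rw [μ_natural_left]
  slice_lhs 3 4 => rw [← N.toFunctor.map_comp, fin_counitl2, N.toFunctor.map_comp]
  slice_lhs 1 3 => rw [comul_mu_glue]
  slice_lhs 1 2 => rw [← N.toFunctor.map_comp, fin_counitl3, N.toFunctor.map_id]
  simp

lemma st_counitr (hN : NerveCondBr N) :
    nerveComul N hN ≫ (nerveH N ◁ nerveCounit N hN) = (ρ_ (nerveH N)).inv := by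
  change comulX N hN ≫ (N.obj (finC 2) ◁ counitX N hN) = (ρ_ (N.obj (finC 2))).inv
  rw [counit_whiskerLeft N hN]
  slice_lhs 2 3 => rw [μ_natural_right]
  slice_lhs 3 4 => rw [← N.toFunctor.map_comp, fin_counitr2, N.toFunctor.map_comp]
  slice_lhs 1 3 => rw [comul_mu_glue]
  slice_lhs 1 2 => rw [← N.toFunctor.map_comp, fin_counitr3, N.toFunctor.map_id]
  simp

end Statements2

section Statements3

variable (N : LaxBraidedFunctor FintypeCat.{0} C)

lemma st_compat1 (hN : NerveCondBr N) :
    nerveMul N ≫ nerveComul N hN =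
      (nerveComul N hN ⊗ₘ nerveComul N hN) ≫
        tensorμ (nerveH N) (nerveH N) (nerveH N) (nerveH N) ≫
        (nerveMul N ⊗ₘ nerveMul N) := by
  haveI := isIso_seg2X N hN
  change mulX N ≫ comulX N hN = (comulX N hN ⊗ₘ comulX N hN) ≫
    tensorμ (N.obj (finC 2)) (N.obj (finC 2)) (N.obj (finC 2)) (N.obj (finC 2)) ≫
      (mulX N ⊗ₘ mulX N)
  rw [← cancel_mono (seg2X N)]
  simp only [Category.assoc]
  slice_lhs 2 3 => rw [comul_seg2X]
  rw [mulX]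
  slice_lhs 2 3 => rw [← N.toFunctor.map_comp, fin_compat2, N.toFunctor.map_comp]
  -- LHS = μ22 ≫ N (d ⊗ d) ≫ N q3
  conv_rhs => rw [seg2X, ← tensorHom_comp_tensorHom]
  slice_rhs 4 5 => rw [μ_natural]
  slice_rhs 2 4 => rw [map_tensormu]
  slice_rhs 4 6 => rw [← N.toFunctor.map_comp, ← N.toFunctor.map_comp, fin_compat1,
    N.toFunctor.map_comp]
  slice_rhs 3 4 => rw [← μ_natural]
  slice_rhs 1 3 => rw [tensorHom_comp_tensorHom, tensorHom_comp_tensorHom, comul_mu_glue]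
  slice_rhs 1 2 => rw [μ_natural]
  simp only [Category.assoc]

lemma st_compat2 (hN : NerveCondBr N) :
    nerveOne N ≫ nerveComul N hN = (λ_ (𝟙_ C)).inv ≫ (nerveOne N ⊗ₘ nerveOne N) := by
  haveI := isIso_seg2X N hN
  change oneX N ≫ comulX N hN = (λ_ (𝟙_ C)).inv ≫ (oneX N ⊗ₘ oneX N)
  rw [← cancel_mono (seg2X N)]
  simp only [Category.assoc]
  slice_lhs 2 3 => rw [comul_seg2X]
  rw [oneX]
  conv_rhs => rw [seg2X, ← tensorHom_comp_tensorHom]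
  slice_rhs 3 4 => rw [μ_natural]
  slice_rhs 1 3 => rw [eps_eps]
  simp only [Category.assoc, ← N.toFunctor.map_comp]
  congr 2
  exact initial.hom_ext _ _

lemma seg0_tensor (hN : NerveCondBr N) :
    (seg0X N ⊗ₘ seg0X N) ≫ μ N.toFunctor (finC 1) (finC 1) ≫ N.map t1Map =
      (λ_ (𝟙_ C)).hom ≫ seg0X N := by
  have he : (ε N.toFunctor ⊗ₘ ε N.toFunctor) ≫ μ N.toFunctor (𝟙_ FintypeCat) (𝟙_ FintypeCat) =
      (λ_ (𝟙_ C)).hom ≫ ε N.toFunctor ≫ N.map (λ_ (𝟙_ FintypeCat)).inv := by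
    rw [← eps_eps N, Iso.hom_inv_id_assoc]
  rw [seg0X, ← tensorHom_comp_tensorHom]
  slice_lhs 2 3 => rw [μ_natural]
  slice_lhs 1 2 => rw [he]
  simp only [Category.assoc, ← N.toFunctor.map_comp]
  congr 2
  exact congrArg _ (initial.hom_ext _ _)

lemma st_compat3 (hN : NerveCondBr N) :
    nerveMul N ≫ nerveCounit N hN =
      (nerveCounit N hN ⊗ₘ nerveCounit N hN) ≫ (λ_ (𝟙_ C)).hom := by
  haveI := isIso_seg0X N hN
  change mulX N ≫ counitX N hN = (counitX N hN ⊗ₘ counitX N hN) ≫ (λ_ (𝟙_ C)).hom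
  rw [← cancel_mono (seg0X N)]
  simp only [Category.assoc]
  rw [counit_seg0X, ← seg0_tensor N hN]
  rw [mulX]
  slice_rhs 1 2 => rw [tensorHom_comp_tensorHom, counit_seg0X]
  slice_rhs 1 2 => rw [μ_natural]
  simp only [Category.assoc, ← N.toFunctor.map_comp]
  congr 2
  exact fin1_ext _ _

lemma st_compat4 (hN : NerveCondBr N) : nerveOne N ≫ nerveCounit N hN = 𝟙 (𝟙_ C) := by
  haveI := isIso_seg0X N hN
  change oneX N ≫ counitX N hN = 𝟙 (𝟙_ C)
  rw [← cancel_mono (seg0X N)]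
  simp only [Category.assoc]
  rw [counit_seg0X, oneX, Category.assoc, ← N.toFunctor.map_comp, Category.id_comp]
  conv_rhs => rw [seg0X]
  congr 1
  exact congrArg _ (initial.hom_ext _ _)

lemma counit_one (hN : NerveCondBr N) (j : finC 1 ⟶ finC 2) :
    counitX N hN ≫ oneX N = N.map nablaMap ≫ N.map j := by
  have h : oneX N = seg0X N ≫ N.map j := by
    rw [oneX, seg0X, Category.assoc, ← N.toFunctor.map_comp]
    exact congrArg _ (congrArg _ (initial.hom_ext _ _))
  rw [h, ← Category.assoc, counit_seg0X]

lemma st_anti1 (hN : NerveCondBr N) :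
    nerveComul N hN ≫ (nerveAntipode N ▷ nerveH N) ≫ nerveMul N =
      nerveCounit N hN ≫ nerveOne N := by
  change comulX N hN ≫ (N.map sMap ▷ N.obj (finC 2)) ≫ mulX N = counitX N hN ≫ oneX N
  rw [counit_one N hN pt1, mulX]
  slice_lhs 2 3 => rw [μ_natural_left]
  slice_lhs 3 4 => rw [← N.toFunctor.map_comp, fin_anti1, N.toFunctor.map_comp]
  slice_lhs 1 3 => rw [comul_mu_glue]
  rw [← N.toFunctor.map_comp, ← N.toFunctor.map_comp, fin_anti2]

lemma st_anti2 (hN : NerveCondBr N) :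
    nerveComul N hN ≫ (nerveH N ◁ nerveAntipode N) ≫ nerveMul N =
      nerveCounit N hN ≫ nerveOne N := by
  change comulX N hN ≫ (N.obj (finC 2) ◁ N.map sMap) ≫ mulX N = counitX N hN ≫ oneX N
  rw [counit_one N hN pt0, mulX]
  slice_lhs 2 3 => rw [μ_natural_right]
  slice_lhs 3 4 => rw [← N.toFunctor.map_comp, fin_anti3, N.toFunctor.map_comp]
  slice_lhs 1 3 => rw [comul_mu_glue]
  rw [← N.toFunctor.map_comp, ← N.toFunctor.map_comp, fin_anti4]

end Statements3

/-- STATEMENT 6: if `N : FinType ⥤ C` is a symmetric lax monoidal functor satisfying the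
nerve condition, then `H := N(Fin 2)` with the product `μ`, unit, coproduct `Δ`,
counit `ε` and antipode `S` described above is a Hopf monoid in `C` whose underlying
monoid is commutative. -/
theorem nerve_gives_commutative_hopf_monoid (N : LaxBraidedFunctor FintypeCat.{0} C)
    (hN : NerveCondBr N) :
    -- the underlying monoid is a commutative monoid object
    ((nerveMul N ▷ nerveH N) ≫ nerveMul N =
        (α_ (nerveH N) (nerveH N) (nerveH N)).hom ≫ (nerveH N ◁ nerveMul N) ≫ nerveMul N) ∧
    ((nerveOne N ▷ nerveH N) ≫ nerveMul N = (λ_ (nerveH N)).hom) ∧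
    ((nerveH N ◁ nerveOne N) ≫ nerveMul N = (ρ_ (nerveH N)).hom) ∧
    ((β_ (nerveH N) (nerveH N)).hom ≫ nerveMul N = nerveMul N) ∧
    -- the coproduct and counit form a comonoid object
    (nerveComul N hN ≫ (nerveComul N hN ▷ nerveH N) =
        nerveComul N hN ≫ (nerveH N ◁ nerveComul N hN) ≫
          (α_ (nerveH N) (nerveH N) (nerveH N)).inv) ∧
    (nerveComul N hN ≫ (nerveCounit N hN ▷ nerveH N) = (λ_ (nerveH N)).inv) ∧
    (nerveComul N hN ≫ (nerveH N ◁ nerveCounit N hN) = (ρ_ (nerveH N)).inv) ∧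
    -- bimonoid compatibilities
    (nerveMul N ≫ nerveComul N hN =
        (nerveComul N hN ⊗ₘ nerveComul N hN) ≫
          tensorμ (nerveH N) (nerveH N) (nerveH N) (nerveH N) ≫
          (nerveMul N ⊗ₘ nerveMul N)) ∧
    (nerveOne N ≫ nerveComul N hN = (λ_ (𝟙_ C)).inv ≫ (nerveOne N ⊗ₘ nerveOne N)) ∧
    (nerveMul N ≫ nerveCounit N hN =
        (nerveCounit N hN ⊗ₘ nerveCounit N hN) ≫ (λ_ (𝟙_ C)).hom) ∧
    (nerveOne N ≫ nerveCounit N hN = 𝟙 (𝟙_ C)) ∧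
    -- antipode axioms
    (nerveComul N hN ≫ (nerveAntipode N ▷ nerveH N) ≫ nerveMul N =
        nerveCounit N hN ≫ nerveOne N) ∧
    (nerveComul N hN ≫ (nerveH N ◁ nerveAntipode N) ≫ nerveMul N =
        nerveCounit N hN ≫ nerveOne N) := by
  exact ⟨st_assoc N, st_unitl N, st_unitr N, st_comm N, st_coassoc N hN, st_counitl N hN,
    st_counitr N hN, st_compat1 N hN, st_compat2 N hN, st_compat3 N hN, st_compat4 N hN,
    st_anti1 N hN, st_anti2 N hN⟩
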